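/- UT transform correctness for the delta rule (ungated case, all α = 1): let K ∈ ℝ^{C×d} stack k_1ᵀ,…,k_Cᵀ, β_1,…,β_C ∈ ℝ, and define T = ( I + StrictTril( Diag(β) K Kᵀ ) )⁻¹ Diag(β), where StrictTril keeps strictly lower-triangular entries. Then the rows u_rᵀ of U = T V satisfy the recurrence u_r = β_r ( v_r − ∑_{i=1}^{r−1} u_i (k_iᵀ k_r) ), where V ∈ ℝ^{C×d_v} stacks v_1ᵀ,…,v_Cᵀ. -/

import Mathlib

open Matrix

theorem stmt19 {C d dv : ℕ}
    (β : Fin C → ℝ) (k : Fin C → Fin d → ℝ) (v : Fin C → Fin dv → ℝ)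
    (A : Matrix (Fin C) (Fin C) ℝ)
    -- A = StrictTril(Diag(β) K Kᵀ)
    (hA : ∀ i j : Fin C, A i j = if j < i then β i * (k i ⬝ᵥ k j) else 0)
    (T : Matrix (Fin C) (Fin C) ℝ)
    (hT : T = (1 + A)⁻¹ * diagonal β)
    (U : Matrix (Fin C) (Fin dv) ℝ)
    (hU : U = T * Matrix.of v) :
    ∀ r : Fin C,
      U r = β r • (v r - ∑ i ∈ Finset.Iio r, (k i ⬝ᵥ k r) • U i) := by
  intro r
  have hdet : (1 + A).det = 1 := by
    have h := Matrix.det_of_lowerTriangular (1 + A) (fun i j hij => by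
      have hij' : i < j := hij
      simp [Matrix.one_apply, hA, Fin.ne_of_lt hij', asymm hij'])
    simp only [h]
    have : ∀ i : Fin C, (1 + A) i i = 1 := fun i => by
      simp [Matrix.one_apply, hA]
    simp [this]
  have hunit : IsUnit (1 + A).det := by rw [hdet]; exact isUnit_one
  have key : (1 + A) * U = diagonal β * Matrix.of v := by
    rw [hU, hT, Matrix.mul_assoc, Matrix.mul_nonsing_inv_cancel_left _ _ hunit]
  funext c
  have hrow := congrFun (congrFun key r) c
  rw [Matrix.mul_apply, Matrix.mul_apply] at hrow
  have hL : ∑ j, (1 + A) r j * U j c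
      = U r c + ∑ i ∈ Finset.Iio r, β r * (k r ⬝ᵥ k i) * U i c := by
    have : ∀ j, (1 + A) r j * U j c
        = (if r = j then U j c else 0) + (if j < r then β r * (k r ⬝ᵥ k j) * U j c else 0) := by
      intro j
      simp [Matrix.add_apply, Matrix.one_apply, hA, add_mul, ite_mul]
    rw [Finset.sum_congr rfl (fun j _ => this j), Finset.sum_add_distrib]
    congr 1
    · simp
    · rw [← Finset.sum_filter]
      congr 1
      ext x
      simp
  have hR : ∑ j, diagonal β r j * Matrix.of v j c = β r * v r c := by
    simp [Matrix.diagonal_apply]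
  rw [hL, hR] at hrow
  simp only [Pi.smul_apply, Pi.sub_apply, Finset.sum_apply, smul_eq_mul, mul_sub,
    Finset.mul_sum]
  rw [eq_sub_iff_add_eq]
  rw [← hrow]
  congr 1
  exact Finset.sum_congr rfl fun i _ => by rw [dotProduct_comm]; ring
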